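/- Let N, n, m ≥ 1, let A ∈ ℝ^{N×N}, B₀ ∈ ℝ^{N×m}, B̃ ∈ ℝ^{N×(mN)}, let P ∈ ℝ^{N×N} be symmetric positive definite with smallest and largest eigenvalues λ_min(P), λ_max(P), let ρ > 0, c_x > 0, c_u > 0, let K : ℝ^N → ℝ^{m×N} and τ : ℝ^N → (0,∞) be functions, and for z ∈ ℝ^N let A_K(z) = A + B₀·K(z) + B̃·(K(z) ⊗ z). Assume that for every z ∈ ℝ^N the symmetric block matrix [[P⁻¹·A_K(z) + A_K(z)ᵀ·P⁻¹ + ρ·P⁻² + τ(z)·P⁻², I_N, K(z)ᵀ], [I_N, −(τ(z)/(2c_x²))·I_N, 0], [K(z), 0, −(τ(z)/(2c_u²))·I_m]] is negative semidefinite. Let L_Φ > 0 and let Φ̂ : ℝⁿ → ℝ^N satisfy ‖ξ‖ ≤ ‖Φ̂(ξ)‖ ≤ L_Φ‖ξ‖ for all ξ ∈ ℝⁿ. Let x : [0,∞) → ℝⁿ and r : [0,∞) → ℝ^N be such that the map t ↦ Φ̂(x(t)) is differentiable with derivative (d/dt)Φ̂(x(t)) = A_K(Φ̂(x(t)))·Φ̂(x(t))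 + r(t) for all t ≥ 0, and such that ‖r(t)‖ ≤ c_x‖Φ̂(x(t))‖ + c_u‖K(Φ̂(x(t)))·Φ̂(x(t))‖ for all t ≥ 0. Then for all t ≥ 0, ‖x(t)‖ ≤ L_Φ·√(λ_max(P)/λ_min(P))·‖x(0)‖·exp(−(ρ·λ_min(P)/(2·λ_max(P)²))·t). -/

import Mathlib

open Matrix

/-- The Euclidean norm of a vector in `ℝ^k`. -/
noncomputable def eucNorm {k : ℕ} (v : Fin k → ℝ) : ℝ :=
  ‖(EuclideanSpace.equiv (Fin k) ℝ).symm v‖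

/-- A real matrix is negative semidefinite if it is symmetric (Hermitian) and its
quadratic form is nonpositive. -/
def NegSemidef {k : Type*} [Fintype k] (M : Matrix k k ℝ) : Prop :=
  M.IsHermitian ∧ ∀ v : k → ℝ, v ⬝ᵥ M.mulVec v ≤ 0

/-- The Kronecker product `M ⊗ z` of a matrix `M ∈ ℝ^{m×N}` with a column vector
`z ∈ ℝ^N`, yielding an `(mN) × N` matrix (rows indexed by `Fin m × Fin N`). -/
def kronMV {m N : ℕ} (M : Matrix (Fin m) (Fin N) ℝ) (z : Fin N → ℝ) :
    Matrix (Fin m × Fin N) (Fin N) ℝ :=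
  Matrix.of fun p j => M p.1 j * z p.2

/-- A symmetric 3×3 block matrix with block sizes `α`, `β`, `γ`. -/
def blk3 {α β γ : Type*} (A11 : Matrix α α ℝ) (A12 : Matrix α β ℝ) (A13 : Matrix α γ ℝ)
    (A21 : Matrix β α ℝ) (A22 : Matrix β β ℝ) (A23 : Matrix β γ ℝ)
    (A31 : Matrix γ α ℝ) (A32 : Matrix γ β ℝ) (A33 : Matrix γ γ ℝ) :
    Matrix ((α ⊕ β) ⊕ γ) ((α ⊕ β) ⊕ γ) ℝ :=
  Matrix.fromBlocks (Matrix.fromBlocks A11 A12 A21 A22) (Matrix.fromRows A13 A23)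
    (Matrix.fromCols A31 A32) A33

/-- The closed-loop matrix `A_K(z) = A + B₀ K(z) + B̃ (K(z) ⊗ z)`. -/
def closedLoop {N m : ℕ} (A : Matrix (Fin N) (Fin N) ℝ) (B0 : Matrix (Fin N) (Fin m) ℝ)
    (Bt : Matrix (Fin N) (Fin m × Fin N) ℝ) (Kz : Matrix (Fin m) (Fin N) ℝ)
    (z : Fin N → ℝ) : Matrix (Fin N) (Fin N) ℝ :=
  A + B0 * Kz + Bt * kronMV Kz z


section Aux

open Matrix

lemma enorm_nonneg' {k : ℕ} (v : Fin k → ℝ) : 0 ≤ eucNorm v := norm_nonneg _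

lemma enorm_sq' {k : ℕ} (v : Fin k → ℝ) : eucNorm v ^ 2 = v ⬝ᵥ v := by
  rw [eucNorm, EuclideanSpace.norm_eq]
  rw [Real.sq_sqrt (by positivity)]
  simp [dotProduct, sq]

lemma dot_le_enorm {k : ℕ} (v w : Fin k → ℝ) : v ⬝ᵥ w ≤ eucNorm v * eucNorm w := by
  have h := real_inner_le_norm ((EuclideanSpace.equiv (Fin k) ℝ).symm v)
    ((EuclideanSpace.equiv (Fin k) ℝ).symm w)
  simpa [eucNorm, PiLp.inner_apply, dotProduct, RCLike.inner_apply, mul_comm] using h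

lemma dot_mulVec_symm {k l : ℕ} (M : Matrix (Fin k) (Fin l) ℝ) (a : Fin k → ℝ) (b : Fin l → ℝ) :
    a ⬝ᵥ M *ᵥ b = b ⬝ᵥ Mᵀ *ᵥ a := by
  rw [dotProduct_mulVec, ← mulVec_transpose, dotProduct_comm]

lemma quad_diag {N : ℕ} (U : Matrix (Fin N) (Fin N) ℝ) (d : Fin N → ℝ) (v : Fin N → ℝ) :
    v ⬝ᵥ (U * diagonal d * Uᵀ) *ᵥ v = ∑ i, d i * ((Uᵀ *ᵥ v) i)^2 := by
  rw [← mulVec_mulVec, ← mulVec_mulVec, dotProduct_mulVec, ← mulVec_transpose]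
  simp [dotProduct, mulVec_diagonal, sq]
  exact Finset.sum_congr rfl fun i _ => by ring

lemma spec_decomp {N : ℕ} (P : Matrix (Fin N) (Fin N) ℝ) (hP : P.PosDef) (v : Fin N → ℝ) :
    ∃ c : Fin N → ℝ, (∀ i, 0 ≤ c i) ∧ v ⬝ᵥ v = ∑ i, c i ∧
      v ⬝ᵥ P⁻¹ *ᵥ v = ∑ i, (hP.1.eigenvalues i)⁻¹ * c i ∧
      v ⬝ᵥ (P⁻¹ * P⁻¹) *ᵥ v = ∑ i, ((hP.1.eigenvalues i)^2)⁻¹ * c i := by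
  classical
  set U : Matrix (Fin N) (Fin N) ℝ := (hP.1.eigenvectorUnitary : Matrix (Fin N) (Fin N) ℝ) with hUdef
  set lam : Fin N → ℝ := hP.1.eigenvalues with hlam
  have hstar : star U = Uᵀ := by
    rw [Matrix.star_eq_conjTranspose, Matrix.conjTranspose_eq_transpose_of_trivial]
  have hU1 : U * Uᵀ = 1 := by
    rw [← hstar]; exact (Matrix.mem_unitaryGroup_iff).mp hP.1.eigenvectorUnitary.2
  have hU2 : Uᵀ * U = 1 := by
    rw [← hstar]; exact (Matrix.mem_unitaryGroup_iff').mp hP.1.eigenvectorUnitary.2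
  have hpos : ∀ i, 0 < lam i := hP.eigenvalues_pos
  have hspec : P = U * diagonal lam * Uᵀ := by
    have := hP.1.spectral_theorem
    rw [Unitary.conjStarAlgAut_apply, hstar] at this
    simpa using this
  have hUT : ∀ X : Matrix (Fin N) (Fin N) ℝ, Uᵀ * (U * X) = X := by
    intro X; rw [← Matrix.mul_assoc, hU2, Matrix.one_mul]
  have h3 : ∀ d e : Fin N → ℝ, (U * diagonal d * Uᵀ) * (U * diagonal e * Uᵀ)
      = U * diagonal (fun i => d i * e i) * Uᵀ := by
    intro d e
    simp only [Matrix.mul_assoc]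
    rw [hUT, ← Matrix.mul_assoc (diagonal d), diagonal_mul_diagonal]
  have key : ∀ d : Fin N → ℝ, (U * diagonal d * Uᵀ) * P = U * diagonal (fun i => d i * lam i) * Uᵀ := by
    intro d
    conv_lhs => rw [hspec]
    exact h3 d lam
  have hinv : P⁻¹ = U * diagonal (fun i => (lam i)⁻¹) * Uᵀ := by
    apply Matrix.inv_eq_left_inv
    rw [key]
    have : (fun i => (lam i)⁻¹ * lam i) = fun _ => (1:ℝ) := by
      funext i; exact inv_mul_cancel₀ (hpos i).ne'
    rw [this, diagonal_one, Matrix.mul_one, hU1]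
  have hinv2 : P⁻¹ * P⁻¹ = U * diagonal (fun i => ((lam i)^2)⁻¹) * Uᵀ := by
    rw [hinv, h3]
    have : (fun i => (lam i)⁻¹ * (lam i)⁻¹) = fun i => ((lam i)^2)⁻¹ := by
      funext i; rw [sq, mul_inv]
    rw [this]
  have hone : (1 : Matrix (Fin N) (Fin N) ℝ) = U * diagonal (fun _ => (1:ℝ)) * Uᵀ := by
    rw [diagonal_one, Matrix.mul_one, hU1]
  refine ⟨fun i => ((Uᵀ *ᵥ v) i)^2, fun i => sq_nonneg _, ?_, ?_, ?_⟩
  · conv_lhs => rw [show v ⬝ᵥ v = v ⬝ᵥ (1 : Matrix (Fin N) (Fin N) ℝ) *ᵥ v by rw [Matrix.one_mulVec]]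
    rw [hone, quad_diag]
    simp
  · rw [hinv, quad_diag]
  · rw [hinv2, quad_diag]

lemma lmi_extract {N m : ℕ}
    (M11 : Matrix (Fin N) (Fin N) ℝ) (Kz : Matrix (Fin m) (Fin N) ℝ)
    (ti cx cu : ℝ) (hti : 0 < ti) (hcx : 0 < cx) (hcu : 0 < cu)
    (h : NegSemidef (blk3 M11 1 Kzᵀ 1 ((-(ti / (2 * cx ^ 2))) • (1 : Matrix (Fin N) (Fin N) ℝ)) 0
        Kz 0 ((-(ti / (2 * cu ^ 2))) • (1 : Matrix (Fin m) (Fin m) ℝ))))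
    (z : Fin N → ℝ) :
    z ⬝ᵥ M11 *ᵥ z + (2 * cx ^ 2 / ti) * (z ⬝ᵥ z)
      + (2 * cu ^ 2 / ti) * ((Kz *ᵥ z) ⬝ᵥ (Kz *ᵥ z)) ≤ 0 := by
  set a : ℝ := 2 * cx ^ 2 / ti with ha
  set b : ℝ := 2 * cu ^ 2 / ti with hb
  have h2 := h.2 (Sum.elim (Sum.elim z (a • z)) (b • (Kz *ᵥ z)))
  simp only [blk3, fromBlocks_mulVec, fromRows_mulVec, fromCols_mulVec_sumElim,
    sumElim_dotProduct_sumElim, Matrix.zero_mulVec, Matrix.one_mulVec, add_zero, zero_add,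
    Matrix.smul_mulVec, Matrix.mulVec_smul, dotProduct_add, dotProduct_smul,
    smul_dotProduct, smul_eq_mul, Pi.add_apply, neg_smul, neg_mulVec, dotProduct_neg,
    Sum.elim_inl, Sum.elim_inr, Sum.elim_comp_inl, Sum.elim_comp_inr] at h2
  simp only [dotProduct_zero, mul_zero, add_zero] at h2
  have hKt : z ⬝ᵥ Kzᵀ *ᵥ (Kz *ᵥ z) = Kz *ᵥ z ⬝ᵥ Kz *ᵥ z := by
    rw [dot_mulVec_symm, transpose_transpose]
  rw [hKt] at h2
  rw [ha, hb] at h2 ⊢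
  have h3 : z ⬝ᵥ M11 *ᵥ z + 2 * cx ^ 2 / ti * (z ⬝ᵥ z)
      + 2 * cu ^ 2 / ti * (Kz *ᵥ z ⬝ᵥ Kz *ᵥ z) =
      z ⬝ᵥ M11 *ᵥ z + 2 * cx ^ 2 / ti * (z ⬝ᵥ z) +
        (2 * cx ^ 2 / ti * (z ⬝ᵥ z) +
          2 * cx ^ 2 / ti * -(ti / (2 * cx ^ 2) * (2 * cx ^ 2 / ti * (z ⬝ᵥ z)))) +
        2 * cu ^ 2 / ti * (Kz *ᵥ z ⬝ᵥ Kz *ᵥ z) +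
        (2 * cu ^ 2 / ti * (Kz *ᵥ z ⬝ᵥ Kz *ᵥ z) +
          2 * cu ^ 2 / ti * -(ti / (2 * cu ^ 2) * (2 * cu ^ 2 / ti * (Kz *ᵥ z ⬝ᵥ Kz *ᵥ z)))) := by
    field_simp
    ring
  rw [h3]
  exact h2

lemma dot_expand {N : ℕ} (Q : Matrix (Fin N) (Fin N) ℝ) (a b : Fin N → ℝ) :
    a ⬝ᵥ Q *ᵥ b = ∑ i, ∑ j, Q i j * a i * b j := by
  simp only [dotProduct, mulVec, Finset.mul_sum]
  exact Finset.sum_congr rfl fun i _ => Finset.sum_congr rfl fun j _ => by ring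

lemma hasDerivWithinAt_quad {N : ℕ} (Q : Matrix (Fin N) (Fin N) ℝ) {z : ℝ → Fin N → ℝ}
    {d : Fin N → ℝ} {s : Set ℝ} {t : ℝ} (hz : HasDerivWithinAt z d s t) :
    HasDerivWithinAt (fun u => z u ⬝ᵥ Q *ᵥ z u) (d ⬝ᵥ Q *ᵥ z t + z t ⬝ᵥ Q *ᵥ d) s t := by
  have hcomp : ∀ i, HasDerivWithinAt (fun u => z u i) (d i) s t :=
    fun i => hasDerivWithinAt_pi.mp hz i
  have hsum : HasDerivWithinAt (fun u => ∑ i, ∑ j, Q i j * z u i * z u j)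
      (∑ i, ∑ j, Q i j * (d i * z t j + z t i * d j)) s t := by
    refine HasDerivWithinAt.fun_sum fun i _ => HasDerivWithinAt.fun_sum fun j _ => ?_
    simpa [mul_assoc] using ((hcomp i).mul (hcomp j)).const_mul (Q i j)
  have heq : (fun u => z u ⬝ᵥ Q *ᵥ z u) = fun u => ∑ i, ∑ j, Q i j * z u i * z u j := by
    funext u; exact dot_expand Q (z u) (z u)
  rw [heq]
  convert hsum using 1
  rw [dot_expand, dot_expand, ← Finset.sum_add_distrib]
  refine Finset.sum_congr rfl fun i _ => ?_
  rw [← Finset.sum_add_distrib]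
  exact Finset.sum_congr rfl fun j _ => by ring

lemma young_ineq (ti c q w : ℝ) (hti : 0 < ti) (hc : c ≠ 0) :
    2 * (c * q * w) ≤ ti / 2 * q ^ 2 + 2 * c ^ 2 / ti * w ^ 2 := by
  rw [← sub_nonneg]
  have h : ti / 2 * q ^ 2 + 2 * c ^ 2 / ti * w ^ 2 - 2 * (c * q * w)
      = (ti * q - 2 * c * w) ^ 2 / (2 * ti) := by
    field_simp
    ring
  rw [h]
  positivity

lemma cont_quad {N : ℕ} (Q : Matrix (Fin N) (Fin N) ℝ) :
    Continuous (fun v : Fin N → ℝ => v ⬝ᵥ Q *ᵥ v) := by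
  have h : (fun v : Fin N → ℝ => v ⬝ᵥ Q *ᵥ v)
      = fun v => ∑ i, ∑ j, Q i j * v i * v j := by
    funext v; exact dot_expand Q v v
  rw [h]
  exact continuous_finset_sum _ fun i _ => continuous_finset_sum _ fun j _ =>
    (continuous_const.mul (continuous_apply i)).mul (continuous_apply j)

end Aux

theorem stmt5 (N n m : ℕ) (hN : 1 ≤ N) (hn : 1 ≤ n) (hm : 1 ≤ m)
    (A : Matrix (Fin N) (Fin N) ℝ) (B0 : Matrix (Fin N) (Fin m) ℝ)
    (Bt : Matrix (Fin N) (Fin m × Fin N) ℝ)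
    (P : Matrix (Fin N) (Fin N) ℝ) (hP : P.PosDef)
    (ρ cx cu : ℝ) (hρ : 0 < ρ) (hcx : 0 < cx) (hcu : 0 < cu)
    (K : (Fin N → ℝ) → Matrix (Fin m) (Fin N) ℝ) (τ : (Fin N → ℝ) → ℝ)
    (hτ : ∀ z, 0 < τ z)
    (hLMI : ∀ z : Fin N → ℝ,
      NegSemidef (blk3
        (P⁻¹ * closedLoop A B0 Bt (K z) z + (closedLoop A B0 Bt (K z) z)ᵀ * P⁻¹
          + ρ • (P⁻¹ * P⁻¹) + τ z • (P⁻¹ * P⁻¹)) 1 (K z)ᵀ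
        1 ((-(τ z / (2 * cx ^ 2))) • (1 : Matrix (Fin N) (Fin N) ℝ)) 0
        (K z) 0 ((-(τ z / (2 * cu ^ 2))) • (1 : Matrix (Fin m) (Fin m) ℝ))))
    (LΦ : ℝ) (hLΦ : 0 < LΦ) (Φ : (Fin n → ℝ) → (Fin N → ℝ))
    (hΦ : ∀ ξ : Fin n → ℝ, eucNorm ξ ≤ eucNorm (Φ ξ) ∧ eucNorm (Φ ξ) ≤ LΦ * eucNorm ξ)
    (x : ℝ → Fin n → ℝ) (r : ℝ → Fin N → ℝ)
    (hdyn : ∀ t : ℝ, 0 ≤ t → HasDerivWithinAt (fun s => Φ (x s))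
      ((closedLoop A B0 Bt (K (Φ (x t))) (Φ (x t))).mulVec (Φ (x t)) + r t) (Set.Ici 0) t)
    (hr : ∀ t : ℝ, 0 ≤ t →
      eucNorm (r t) ≤ cx * eucNorm (Φ (x t)) + cu * eucNorm ((K (Φ (x t))).mulVec (Φ (x t)))) :
    ∀ t : ℝ, 0 ≤ t → eucNorm (x t) ≤
      LΦ * Real.sqrt ((⨆ i, hP.1.eigenvalues i) / (⨅ i, hP.1.eigenvalues i)) * eucNorm (x 0) *
        Real.exp (-(ρ * (⨅ i, hP.1.eigenvalues i) / (2 * (⨆ i, hP.1.eigenvalues i) ^ 2)) * t) := by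
  classical
  haveI : Nonempty (Fin N) := ⟨⟨0, hN⟩⟩
  set lam : Fin N → ℝ := hP.1.eigenvalues with hlamdef
  set lmin : ℝ := ⨅ i, lam i with hlmindef
  set lmax : ℝ := ⨆ i, lam i with hlmaxdef
  have hpos : ∀ i, 0 < lam i := hP.eigenvalues_pos
  have hle : ∀ i, lmin ≤ lam i := fun i => ciInf_le (Finite.bddBelow_range _) i
  have hge : ∀ i, lam i ≤ lmax := fun i => le_ciSup (Finite.bddAbove_range _) i
  obtain ⟨i0, hi0⟩ : ∃ i, lam i = lmin := exists_eq_ciInf_of_finite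
  have hlmin_pos : 0 < lmin := hi0 ▸ hpos i0
  have hminmax : lmin ≤ lmax := (hle i0).trans (hge i0)
  have hlmax_pos : 0 < lmax := hlmin_pos.trans_le hminmax
  have hPsymm : Pᵀ = P := by
    rw [← Matrix.conjTranspose_eq_transpose_of_trivial]; exact hP.1
  have hQsymm : (P⁻¹)ᵀ = P⁻¹ := by
    rw [Matrix.transpose_nonsing_inv, hPsymm]
  have f1 : ∀ v : Fin N → ℝ, v ⬝ᵥ v ≤ lmax * (v ⬝ᵥ P⁻¹ *ᵥ v) := by
    intro v
    obtain ⟨c, hc, e0, e1, _⟩ := spec_decomp P hP v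
    rw [e0, e1, Finset.mul_sum]
    refine Finset.sum_le_sum fun i _ => ?_
    have h1 : (1:ℝ) ≤ lmax * (lam i)⁻¹ := by
      rw [← div_eq_mul_inv, le_div_iff₀ (hpos i)]
      simpa using hge i
    calc c i = 1 * c i := (one_mul _).symm
      _ ≤ lmax * (lam i)⁻¹ * c i := mul_le_mul_of_nonneg_right h1 (hc i)
      _ = lmax * ((lam i)⁻¹ * c i) := by ring
  have f2 : ∀ v : Fin N → ℝ, v ⬝ᵥ P⁻¹ *ᵥ v ≤ lmin⁻¹ * (v ⬝ᵥ v) := by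
    intro v
    obtain ⟨c, hc, e0, e1, _⟩ := spec_decomp P hP v
    rw [e0, e1, Finset.mul_sum]
    refine Finset.sum_le_sum fun i _ => ?_
    exact mul_le_mul_of_nonneg_right (inv_anti₀ hlmin_pos (hle i)) (hc i)
  have f3 : ∀ v : Fin N → ℝ, v ⬝ᵥ P⁻¹ *ᵥ v ≤ lmax * (v ⬝ᵥ (P⁻¹ * P⁻¹) *ᵥ v) := by
    intro v
    obtain ⟨c, hc, _, e1, e2⟩ := spec_decomp P hP v
    rw [e1, e2, Finset.mul_sum]
    refine Finset.sum_le_sum fun i _ => ?_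
    have h1 : (lam i)⁻¹ ≤ lmax * (lam i ^ 2)⁻¹ := by
      rw [← div_eq_mul_inv, le_div_iff₀ (pow_pos (hpos i) 2)]
      have h2 : (lam i)⁻¹ * lam i ^ 2 = lam i := by
        rw [sq, ← mul_assoc, inv_mul_cancel₀ (hpos i).ne', one_mul]
      rw [h2]; exact hge i
    calc (lam i)⁻¹ * c i ≤ lmax * (lam i ^ 2)⁻¹ * c i :=
        mul_le_mul_of_nonneg_right h1 (hc i)
      _ = lmax * ((lam i ^ 2)⁻¹ * c i) := by ring
  -- the Lyapunov function and its derivative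
  set V : ℝ → ℝ := fun t => Φ (x t) ⬝ᵥ P⁻¹ *ᵥ Φ (x t) with hVdef
  set V' : ℝ → ℝ := fun t => 2 * (Φ (x t) ⬝ᵥ P⁻¹ *ᵥ
    ((closedLoop A B0 Bt (K (Φ (x t))) (Φ (x t))) *ᵥ Φ (x t) + r t)) with hV'def
  have hVd : ∀ t, 0 ≤ t → HasDerivWithinAt V (V' t) (Set.Ici 0) t := by
    intro t ht
    have h := hasDerivWithinAt_quad P⁻¹ (hdyn t ht)
    convert h using 1
    rw [hV'def]
    rw [dot_mulVec_symm P⁻¹ ((closedLoop A B0 Bt (K (Φ (x t))) (Φ (x t))) *ᵥ Φ (x t) + r t)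
      (Φ (x t))]
    rw [hQsymm]
    ring
  -- dissipation bound
  have hbound : ∀ t, 0 ≤ t → V' t ≤ -(ρ / lmax) * V t + 0 := by
    intro t ht
    have hti := hτ (Φ (x t))
    have hS := lmi_extract
      (P⁻¹ * closedLoop A B0 Bt (K (Φ (x t))) (Φ (x t))
        + (closedLoop A B0 Bt (K (Φ (x t))) (Φ (x t)))ᵀ * P⁻¹
        + ρ • (P⁻¹ * P⁻¹) + τ (Φ (x t)) • (P⁻¹ * P⁻¹))
      (K (Φ (x t))) (τ (Φ (x t))) cx cu hti hcx hcu (hLMI (Φ (x t))) (Φ (x t))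
    have hSexp : Φ (x t) ⬝ᵥ (P⁻¹ * closedLoop A B0 Bt (K (Φ (x t))) (Φ (x t))
        + (closedLoop A B0 Bt (K (Φ (x t))) (Φ (x t)))ᵀ * P⁻¹
        + ρ • (P⁻¹ * P⁻¹) + τ (Φ (x t)) • (P⁻¹ * P⁻¹)) *ᵥ Φ (x t)
        = 2 * (Φ (x t) ⬝ᵥ P⁻¹ *ᵥ (closedLoop A B0 Bt (K (Φ (x t))) (Φ (x t)) *ᵥ Φ (x t)))
          + (ρ + τ (Φ (x t))) * (Φ (x t) ⬝ᵥ (P⁻¹ * P⁻¹) *ᵥ Φ (x t)) := by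
      simp only [Matrix.add_mulVec, dotProduct_add, Matrix.smul_mulVec, dotProduct_smul,
        smul_eq_mul]
      have e1 : Φ (x t) ⬝ᵥ (P⁻¹ * closedLoop A B0 Bt (K (Φ (x t))) (Φ (x t))) *ᵥ Φ (x t)
          = Φ (x t) ⬝ᵥ P⁻¹ *ᵥ (closedLoop A B0 Bt (K (Φ (x t))) (Φ (x t)) *ᵥ Φ (x t)) := by
        rw [← mulVec_mulVec]
      have e2 : Φ (x t) ⬝ᵥ ((closedLoop A B0 Bt (K (Φ (x t))) (Φ (x t)))ᵀ * P⁻¹) *ᵥ Φ (x t)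
          = Φ (x t) ⬝ᵥ P⁻¹ *ᵥ (closedLoop A B0 Bt (K (Φ (x t))) (Φ (x t)) *ᵥ Φ (x t)) := by
        rw [dot_mulVec_symm, Matrix.transpose_mul, Matrix.transpose_transpose, hQsymm,
          ← mulVec_mulVec]
      rw [e1, e2]
      ring
    rw [hSexp] at hS
    set s2 : ℝ := Φ (x t) ⬝ᵥ (P⁻¹ * P⁻¹) *ᵥ Φ (x t) with hs2def
    set q : ℝ := eucNorm (P⁻¹ *ᵥ Φ (x t)) with hqdef
    set zn : ℝ := eucNorm (Φ (x t)) with hzndef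
    set kn : ℝ := eucNorm (K (Φ (x t)) *ᵥ Φ (x t)) with hkndef
    have hq2 : q ^ 2 = s2 := by
      rw [hqdef, enorm_sq', dot_mulVec_symm, hQsymm, mulVec_mulVec]
    have hzn2 : zn ^ 2 = Φ (x t) ⬝ᵥ Φ (x t) := enorm_sq' _
    have hkn2 : kn ^ 2 = (K (Φ (x t)) *ᵥ Φ (x t)) ⬝ᵥ (K (Φ (x t)) *ᵥ Φ (x t)) := enorm_sq' _
    have hrQ : Φ (x t) ⬝ᵥ P⁻¹ *ᵥ r t ≤ q * (cx * zn + cu * kn) := by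
      have h1 : Φ (x t) ⬝ᵥ P⁻¹ *ᵥ r t = (P⁻¹ *ᵥ Φ (x t)) ⬝ᵥ r t := by
        rw [dot_mulVec_symm, hQsymm, dotProduct_comm]
      calc Φ (x t) ⬝ᵥ P⁻¹ *ᵥ r t = (P⁻¹ *ᵥ Φ (x t)) ⬝ᵥ r t := h1
        _ ≤ q * eucNorm (r t) := dot_le_enorm _ _
        _ ≤ q * (cx * zn + cu * kn) :=
            mul_le_mul_of_nonneg_left (hr t ht) (enorm_nonneg' _)
    have hyoung : 2 * (Φ (x t) ⬝ᵥ P⁻¹ *ᵥ r t) ≤ τ (Φ (x t)) * s2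
        + (2 * cx ^ 2 / τ (Φ (x t))) * (Φ (x t) ⬝ᵥ Φ (x t))
        + (2 * cu ^ 2 / τ (Φ (x t))) * ((K (Φ (x t)) *ᵥ Φ (x t)) ⬝ᵥ (K (Φ (x t)) *ᵥ Φ (x t))) := by
      have y1 := young_ineq (τ (Φ (x t))) cx q zn hti hcx.ne'
      have y2 := young_ineq (τ (Φ (x t))) cu q kn hti hcu.ne'
      have h2 : 2 * (Φ (x t) ⬝ᵥ P⁻¹ *ᵥ r t) ≤ 2 * (cx * q * zn) + 2 * (cu * q * kn) := by
        nlinarith [hrQ]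
      calc 2 * (Φ (x t) ⬝ᵥ P⁻¹ *ᵥ r t) ≤ 2 * (cx * q * zn) + 2 * (cu * q * kn) := h2
        _ ≤ (τ (Φ (x t)) / 2 * q ^ 2 + 2 * cx ^ 2 / τ (Φ (x t)) * zn ^ 2)
            + (τ (Φ (x t)) / 2 * q ^ 2 + 2 * cu ^ 2 / τ (Φ (x t)) * kn ^ 2) := add_le_add y1 y2
        _ = τ (Φ (x t)) * q ^ 2 + (2 * cx ^ 2 / τ (Φ (x t))) * zn ^ 2
            + (2 * cu ^ 2 / τ (Φ (x t))) * kn ^ 2 := by ring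
        _ = τ (Φ (x t)) * s2 + (2 * cx ^ 2 / τ (Φ (x t))) * (Φ (x t) ⬝ᵥ Φ (x t))
            + (2 * cu ^ 2 / τ (Φ (x t)))
              * ((K (Φ (x t)) *ᵥ Φ (x t)) ⬝ᵥ (K (Φ (x t)) *ᵥ Φ (x t))) := by
            rw [hq2, hzn2, hkn2]
    have hVexp : V' t = 2 * (Φ (x t) ⬝ᵥ P⁻¹ *ᵥ (closedLoop A B0 Bt (K (Φ (x t))) (Φ (x t)) *ᵥ Φ (x t)))
        + 2 * (Φ (x t) ⬝ᵥ P⁻¹ *ᵥ r t) := by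
      rw [hV'def]
      simp only [Matrix.mulVec_add, dotProduct_add]
      ring
    have hVle : V' t ≤ -ρ * s2 := by
      rw [hVexp]
      linarith [hyoung, hS]
    have hs2V : V t / lmax ≤ s2 := by
      rw [div_le_iff₀ hlmax_pos, mul_comm]
      exact f3 (Φ (x t))
    calc V' t ≤ -ρ * s2 := hVle
      _ ≤ -ρ * (V t / lmax) := by
          apply mul_le_mul_of_nonpos_left hs2V (by linarith)
      _ = -(ρ / lmax) * V t + 0 := by ring
  have hzcont : ContinuousOn (fun t => Φ (x t)) (Set.Ici 0) :=
    fun t ht => (hdyn t ht).continuousWithinAt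
  have hVcont : ContinuousOn V (Set.Ici 0) := (cont_quad P⁻¹).comp_continuousOn hzcont
  have main : ∀ T : ℝ, 0 ≤ T → V T ≤ V 0 * Real.exp (-(ρ / lmax) * T) := by
    intro T hT
    have h := le_gronwallBound_of_liminf_deriv_right_le (f := V) (f' := V')
      (δ := V 0) (K := -(ρ / lmax)) (ε := 0) (a := 0) (b := T)
      (hVcont.mono Set.Icc_subset_Ici_self)
      (fun s hs rr hrr =>
        ((hVd s hs.1).mono (Set.Ici_subset_Ici.mpr hs.1)).liminf_right_slope_le hrr)
      le_rfl (fun s hs => hbound s hs.1) T (Set.right_mem_Icc.mpr hT)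
    rwa [gronwallBound_ε0, sub_zero] at h
  intro t ht
  have hxt := (hΦ (x t)).1
  have h0 : eucNorm (Φ (x 0)) ≤ LΦ * eucNorm (x 0) := (hΦ (x 0)).2
  have hE : (0:ℝ) < Real.exp (-(ρ / lmax) * t) := Real.exp_pos _
  have hchain : eucNorm (Φ (x t)) ^ 2
      ≤ lmax / lmin * (LΦ * eucNorm (x 0)) ^ 2 * Real.exp (-(ρ / lmax) * t) := by
    calc eucNorm (Φ (x t)) ^ 2 = Φ (x t) ⬝ᵥ Φ (x t) := enorm_sq' _
      _ ≤ lmax * (Φ (x t) ⬝ᵥ P⁻¹ *ᵥ Φ (x t)) := f1 _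
      _ = lmax * V t := rfl
      _ ≤ lmax * (V 0 * Real.exp (-(ρ / lmax) * t)) :=
          mul_le_mul_of_nonneg_left (main t ht) hlmax_pos.le
      _ ≤ lmax * ((lmin⁻¹ * (Φ (x 0) ⬝ᵥ Φ (x 0))) * Real.exp (-(ρ / lmax) * t)) :=
          mul_le_mul_of_nonneg_left
            (mul_le_mul_of_nonneg_right (f2 _) hE.le) hlmax_pos.le
      _ = lmax / lmin * (eucNorm (Φ (x 0))) ^ 2 * Real.exp (-(ρ / lmax) * t) := by
          rw [enorm_sq']
          field_simp
      _ ≤ lmax / lmin * (LΦ * eucNorm (x 0)) ^ 2 * Real.exp (-(ρ / lmax) * t) := by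
          apply mul_le_mul_of_nonneg_right _ hE.le
          apply mul_le_mul_of_nonneg_left _ (by positivity)
          exact pow_le_pow_left₀ (enorm_nonneg' _) h0 2
  have hsq : eucNorm (Φ (x t))
      ≤ Real.sqrt (lmax / lmin * (LΦ * eucNorm (x 0)) ^ 2 * Real.exp (-(ρ / lmax) * t)) := by
    rw [← Real.sqrt_sq (enorm_nonneg' (Φ (x t)))]
    exact Real.sqrt_le_sqrt hchain
  have hexp_half : Real.exp (-(ρ / lmax) * t) = (Real.exp (-(ρ / lmax) * t / 2)) ^ 2 := by
    rw [sq, ← Real.exp_add]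
    congr 1
    ring
  have hsqrt_eq : Real.sqrt (lmax / lmin * (LΦ * eucNorm (x 0)) ^ 2 * Real.exp (-(ρ / lmax) * t))
      = Real.sqrt (lmax / lmin) * (LΦ * eucNorm (x 0)) * Real.exp (-(ρ / lmax) * t / 2) := by
    rw [Real.sqrt_mul (by positivity), Real.sqrt_mul (by positivity),
      Real.sqrt_sq (mul_nonneg hLΦ.le (enorm_nonneg' _)), hexp_half,
      Real.sqrt_sq (Real.exp_nonneg _)]
  have hexp_le : Real.exp (-(ρ / lmax) * t / 2)
      ≤ Real.exp (-(ρ * lmin / (2 * lmax ^ 2)) * t) := by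
    apply Real.exp_le_exp.mpr
    have h1 : ρ * lmin / (2 * lmax ^ 2) ≤ ρ / lmax / 2 := by
      rw [div_div, div_le_div_iff₀ (by positivity) (by positivity)]
      nlinarith [mul_le_mul_of_nonneg_left hminmax (mul_nonneg hρ.le hlmax_pos.le)]
    have h2 := mul_le_mul_of_nonneg_right h1 ht
    linarith
  calc eucNorm (x t) ≤ eucNorm (Φ (x t)) := hxt
    _ ≤ Real.sqrt (lmax / lmin) * (LΦ * eucNorm (x 0)) * Real.exp (-(ρ / lmax) * t / 2) := by
        rw [← hsqrt_eq]; exact hsq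
    _ ≤ Real.sqrt (lmax / lmin) * (LΦ * eucNorm (x 0))
        * Real.exp (-(ρ * lmin / (2 * lmax ^ 2)) * t) :=
        mul_le_mul_of_nonneg_left hexp_le
          (mul_nonneg (Real.sqrt_nonneg _) (mul_nonneg hLΦ.le (enorm_nonneg' _)))
    _ = LΦ * Real.sqrt (lmax / lmin) * eucNorm (x 0)
        * Real.exp (-(ρ * lmin / (2 * lmax ^ 2)) * t) := by ring
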